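/- Let m ∈ {5,6,10} or m ≥ 13 be square-free, and let 𝒪 be the ring of integers of ℚ(√-m) with ω as usual (so N(ω) = ωω̄ ≥ 4). Then no diagonal positive definite Hermitian 𝒪-lattice L = ⟨a₁,…,aₙ⟩ represents the binary Hermitian lattice with Gram matrix [[2,ω],[ω̄,c]] for any integer c with ωω̄/2 < c < ωω̄. -/
import Mathlib


open Complex Matrix
open scoped ComplexOrder

/-- ω for ℚ(√-m): √-m if m ≡ 1,2 (mod 4), (1+√-m)/2 if m ≡ 3 (mod 4). -/
noncomputable def omg (m : ℕ) : ℂ :=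
  if m % 4 = 3 then (1 + Real.sqrt m * Complex.I) / 2 else Real.sqrt m * Complex.I

/-- The ring of integers 𝒪 = ℤ[ω] of ℚ(√-m), as a subring of ℂ. -/
noncomputable def ringO (m : ℕ) : Subalgebra ℤ ℂ := Algebra.adjoin ℤ {omg m}

lemma omg_eq (m : ℕ) :
    omg m = ↑(if m % 4 = 3 then (1:ℝ)/2 else 0)
      + ↑(if m % 4 = 3 then Real.sqrt m / 2 else Real.sqrt m) * Complex.I := by
  by_cases h4 : m % 4 = 3 <;> simp [omg, h4] <;> push_cast <;> ring

lemma omg_re (m : ℕ) : (omg m).re = if m % 4 = 3 then 1/2 else 0 := by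
  rw [omg_eq]; simp

lemma omg_im (m : ℕ) : (omg m).im = if m % 4 = 3 then Real.sqrt m / 2 else Real.sqrt m := by
  rw [omg_eq]; simp

lemma normSq_omg (m : ℕ) : normSq (omg m) = if m % 4 = 3 then ((1:ℝ)+m)/4 else (m:ℝ) := by
  have hs : Real.sqrt m * Real.sqrt m = m := Real.mul_self_sqrt (Nat.cast_nonneg m)
  rw [normSq_apply, omg_re, omg_im]
  by_cases h4 : m % 4 = 3 <;> simp [h4] <;> nlinarith [hs]

lemma omg_sq (m : ℕ) : ∃ A B : ℤ, omg m ^ 2 = A + B * omg m := by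
  have hs : (Real.sqrt m : ℂ) ^ 2 = (m : ℂ) := by
    norm_cast
    rw [sq, Real.mul_self_sqrt (Nat.cast_nonneg m)]
  by_cases h4 : m % 4 = 3
  · obtain ⟨k, hk⟩ : ∃ k : ℕ, m + 1 = 4 * k := ⟨(m+1)/4, by omega⟩
    refine ⟨-(k:ℤ), 1, ?_⟩
    have hm' : (m : ℂ) + 1 = 4 * k := by exact_mod_cast congrArg (Nat.cast : ℕ → ℂ) hk
    rw [omg, if_pos h4]
    push_cast
    linear_combination (Complex.I^2/4) * hs + ((m:ℂ)/4) * Complex.I_sq - (1/4) * hm'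
  · refine ⟨-(m:ℤ), 0, ?_⟩
    rw [omg, if_neg h4]
    push_cast
    linear_combination (Complex.I^2) * hs + (m:ℂ) * Complex.I_sq

lemma mem_ringO {m : ℕ} {α : ℂ} (h : α ∈ ringO m) : ∃ u v : ℤ, α = u + v * omg m := by
  induction h using Algebra.adjoin_induction with
  | mem x hx => exact ⟨0, 1, by simp [Set.mem_singleton_iff.mp hx]⟩
  | algebraMap r => exact ⟨r, 0, by simp⟩
  | add x y hx hy ihx ihy =>
    obtain ⟨u, v, rfl⟩ := ihx; obtain ⟨s, t, rfl⟩ := ihy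
    exact ⟨u + s, v + t, by push_cast; ring⟩
  | mul x y hx hy ihx ihy =>
    obtain ⟨u, v, rfl⟩ := ihx; obtain ⟨s, t, rfl⟩ := ihy
    obtain ⟨A, B, hAB⟩ := omg_sq m
    refine ⟨u*s + v*t*A, u*t + v*s + v*t*B, ?_⟩
    push_cast
    linear_combination ((v:ℂ) * t) * hAB

lemma int_ineq3 (M u v : ℤ) (hM : 1 ≤ M) (hv : v ≠ 0) :
    1 + M ≤ (2*u+v)^2 + v^2*M := by
  by_cases h1 : v = 1
  · subst h1
    have hw : 1 ≤ 2*u+1 ∨ 2*u+1 ≤ -1 := by omega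
    rcases hw with hw | hw <;> nlinarith
  by_cases h2 : v = -1
  · subst h2
    have hw : 1 ≤ 2*u-1 ∨ 2*u-1 ≤ -1 := by omega
    rcases hw with hw | hw <;> nlinarith
  · have h4 : 2 ≤ v ∨ v ≤ -2 := by omega
    have : 4 ≤ v^2 := by rcases h4 with h | h <;> nlinarith
    nlinarith [sq_nonneg (2*u+v)]

lemma int_ineq2 (M u v : ℤ) (hM : 0 ≤ M) (hv : v ≠ 0) : M ≤ u^2 + v^2*M := by
  have h4 : 1 ≤ v ∨ v ≤ -1 := by omega
  have : 1 ≤ v^2 := by rcases h4 with h | h <;> nlinarith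
  nlinarith [sq_nonneg u]

lemma normSq_bound (m : ℕ) (hm1 : 1 ≤ m) (u v : ℤ) (hv : v ≠ 0) :
    normSq (omg m) ≤ normSq ((u:ℂ) + v * omg m) := by
  have hs : Real.sqrt m * Real.sqrt m = m := Real.mul_self_sqrt (Nat.cast_nonneg m)
  have hre : ((u:ℂ) + v * omg m).re = (u:ℝ) + v * (omg m).re := by simp
  have him : ((u:ℂ) + v * omg m).im = (v:ℝ) * (omg m).im := by simp
  rw [normSq_apply, normSq_apply, hre, him, omg_re, omg_im]
  by_cases h4 : m % 4 = 3 <;> simp only [h4, if_true, if_false, if_pos, if_neg]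
  · have hZ : (1:ℤ) + m ≤ (2*u+v)^2 + v^2*m := int_ineq3 m u v (by exact_mod_cast hm1) hv
    have hR : (1:ℝ) + m ≤ ((2*u+v:ℤ):ℝ)^2 + ((v:ℤ):ℝ)^2*m := by exact_mod_cast hZ
    push_cast at hR
    nlinarith [hR, hs]
  · have hZ : (m:ℤ) ≤ u^2 + v^2*m := int_ineq2 m u v (by positivity) hv
    have hR : (m:ℝ) ≤ ((u:ℤ):ℝ)^2 + ((v:ℤ):ℝ)^2*m := by exact_mod_cast hZ
    push_cast at hR
    nlinarith [hR, hs]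

/-- No diagonal Hermitian lattice ⟨a₁,…,aₙ⟩ represents [[2,ω],[ω̄,c]] when
ωω̄/2 < c < ωω̄ (thus when m = 5, 6, 10 or m ≥ 13, there is no diagonal
2-universal Hermitian lattice). -/
theorem no_diagonal_represents (m : ℕ) (hsf : Squarefree m)
    (hm : m = 5 ∨ m = 6 ∨ m = 10 ∨ 13 ≤ m)
    (c : ℤ) (hc1 : Complex.normSq (omg m) / 2 < (c : ℝ))
    (hc2 : (c : ℝ) < Complex.normSq (omg m))
    (n : ℕ) (a : Fin n → ℕ) (ha : ∀ i, 0 < a i) :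
    ¬∃ X : Matrix (Fin 2) (Fin n) ℂ, (∀ i j, X i j ∈ ringO m) ∧
      !![(2 : ℂ), omg m; (starRingEnd ℂ) (omg m), (c : ℂ)]
        = X * Matrix.diagonal (fun i => (a i : ℂ)) * Xᴴ := by
  rintro ⟨X, hX, hEq⟩
  have hm5 : 5 ≤ m := by rcases hm with h | h | h | h <;> omega
  -- N := normSq ω ≥ 4
  have hN4 : (4:ℝ) ≤ normSq (omg m) := by
    rw [normSq_omg]
    by_cases h4 : m % 4 = 3 <;> simp only [h4, if_true, if_false, if_pos, if_neg]
    · have h15 : 15 ≤ m := by rcases hm with h | h | h | h <;> omega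
      have : (15:ℝ) ≤ m := by exact_mod_cast h15
      linarith
    · have : (5:ℝ) ≤ m := by exact_mod_cast hm5
      linarith
  -- entries of the matrix equation
  have key : ∀ i k : Fin 2,
      (!![(2 : ℂ), omg m; (starRingEnd ℂ) (omg m), (c : ℂ)]) i k
        = ∑ j, X i j * (a j : ℂ) * (starRingEnd ℂ) (X k j) := by
    intro i k
    rw [hEq, Matrix.mul_apply]
    simp only [Matrix.mul_diagonal, Matrix.conjTranspose_apply, Complex.star_def]
  have h00 : (2:ℂ) = ∑ j, X 0 j * (a j : ℂ) * (starRingEnd ℂ) (X 0 j) := by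
    simpa using key 0 0
  have h01 : omg m = ∑ j, X 0 j * (a j : ℂ) * (starRingEnd ℂ) (X 1 j) := by
    simpa using key 0 1
  have h11 : (c:ℂ) = ∑ j, X 1 j * (a j : ℂ) * (starRingEnd ℂ) (X 1 j) := by
    simpa using key 1 1
  -- diagonal sums are real
  have hsum : ∀ (i : Fin 2) (r : ℝ), ((r:ℂ) = ∑ j, X i j * (a j : ℂ) * (starRingEnd ℂ) (X i j)) →
      r = ∑ j, (a j : ℝ) * normSq (X i j) := by
    intro i r h
    have h2 : (r:ℂ) = ((∑ j, (a j : ℝ) * normSq (X i j) : ℝ) : ℂ) := by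
      rw [h]
      push_cast
      refine Finset.sum_congr rfl fun j _ => ?_
      rw [mul_comm (X i j) ((a j : ℂ)), mul_assoc, Complex.mul_conj]
    exact_mod_cast h2
  have h2R : (2:ℝ) = ∑ j, (a j : ℝ) * normSq (X 0 j) := hsum 0 2 (by exact_mod_cast h00)
  have hcR : (c:ℝ) = ∑ j, (a j : ℝ) * normSq (X 1 j) := hsum 1 c (by exact_mod_cast h11)
  -- termwise bounds
  have hbound : ∀ (i : Fin 2) (S : ℝ), (S = ∑ j, (a j : ℝ) * normSq (X i j)) →
      ∀ j, normSq (X i j) ≤ S := by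
    intro i S hS j
    have h1 : (a j : ℝ) * normSq (X i j) ≤ S := by
      rw [hS]
      exact Finset.single_le_sum (f := fun j => (a j : ℝ) * normSq (X i j))
        (fun j _ => mul_nonneg (by positivity) (normSq_nonneg _)) (Finset.mem_univ j)
    have ha1 : (1:ℝ) ≤ (a j : ℝ) := by exact_mod_cast ha j
    nlinarith [normSq_nonneg (X i j)]
  -- entries with small norm are real
  have hreal : ∀ (i : Fin 2) (j : Fin n), normSq (X i j) < normSq (omg m) → (X i j).im = 0 := by
    intro i j hlt
    obtain ⟨u, v, hx⟩ := mem_ringO (hX i j)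
    by_cases hv : v = 0
    · rw [hx, hv]; simp
    · exact absurd (hx ▸ normSq_bound m (by omega) u v hv) (not_le.2 (hx ▸ hlt))
  have him0 : ∀ j, (X 0 j).im = 0 := fun j => hreal 0 j
    (lt_of_le_of_lt (hbound 0 2 h2R j) (by linarith))
  have him1 : ∀ j, (X 1 j).im = 0 := fun j => hreal 1 j
    (lt_of_le_of_lt (hbound 1 c hcR j) hc2)
  -- imaginary part of the off-diagonal entry
  have himw : (omg m).im = 0 := by
    rw [h01, Complex.im_sum]
    refine Finset.sum_eq_zero fun j _ => ?_
    simp [Complex.mul_im, him0 j, him1 j]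
  have hsqrt : Real.sqrt m ≠ 0 := by
    refine ne_of_gt (Real.sqrt_pos.2 ?_)
    have : (5:ℝ) ≤ m := by exact_mod_cast hm5
    linarith
  rw [omg_im] at himw
  by_cases h4 : m % 4 = 3
  · rw [if_pos h4] at himw
    exact hsqrt (by linarith)
  · rw [if_neg h4] at himw
    exact hsqrt himw
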